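/- Under the hypotheses of the preceding statement (nonzero velocities v_k, positive weights ω_k summing to 1, positive tumbling values T(v_k) of the form 1 ± χ_M ± χ_N, and the non-resonance condition min_k |v_k| > Δx (χ_M + χ_N)), the matrix Q with entries Q_{kℓ} = δ_{kℓ}( |v_k| + (Δx/2) T(v_k) ) - (Δx/2) ω_ℓ T(v_ℓ) is invertible; consequently the scattering matrix S = Q^{-1} Q̃, where Q̃_{kℓ} = δ_{kℓ}( |v_k| - (Δx/2) T(v_k) ) + (Δx/2) ω_ℓ T(v_ℓ), is well defined. -/
import Mathlib


open Finset

/-- Under the non-resonance condition `min_k |v_k| > Δx (χ_M + χ_N)`, the matrix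
`Q` of the second-order finite-difference discretization of the stationary
kinetic equation is invertible, so the scattering matrix `S = Q⁻¹ Q̃` is well
defined (it satisfies `Q S = Q̃`). -/
theorem Q_invertible_scattering_matrix_well_defined
    (K : ℕ) (hK : 1 ≤ K)
    (v ω T : Fin (2 * K) → ℝ)
    (hv : ∀ k, v k ≠ 0)
    (hω : ∀ k, 0 < ω k) (hωsum : ∑ k, ω k = 1)
    (χM χN : ℝ) (hχM : 0 ≤ χM) (hχN : 0 ≤ χN)
    (hTform : ∀ k, T k = 1 + χM + χN ∨ T k = 1 + χM - χN ∨
      T k = 1 - χM + χN ∨ T k = 1 - χM - χN)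
    (hTpos : ∀ k, 0 < T k)
    (Δx : ℝ) (hΔx : 0 < Δx)
    (Q Qt : Matrix (Fin (2 * K)) (Fin (2 * K)) ℝ)
    (hQ : ∀ k l, Q k l =
      (if k = l then |v k| + Δx / 2 * T k else 0) - Δx / 2 * ω l * T l)
    (hQt : ∀ k l, Qt k l =
      (if k = l then |v k| - Δx / 2 * T k else 0) + Δx / 2 * ω l * T l)
    (vmin : ℝ)
    (hvmin : vmin = Finset.univ.inf'
      (Finset.univ_nonempty_iff.mpr ⟨⟨0, by omega⟩⟩) fun k => |v k|)
    (hnr : Δx * (χM + χN) < vmin) :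
    IsUnit Q ∧ Q * (Q⁻¹ * Qt) = Qt := by
  have hT_ub : ∀ k, T k ≤ 1 + χM + χN := by
    intro k; rcases hTform k with h | h | h | h <;> rw [h] <;> linarith
  have hT_lb : ∀ k, 1 - χM - χN ≤ T k := by
    intro k; rcases hTform k with h | h | h | h <;> rw [h] <;> linarith
  have hdet : Q.det ≠ 0 := by
    apply det_ne_zero_of_sum_row_lt_diag
    intro k
    have hvk : vmin ≤ |v k| := by
      rw [hvmin]; exact Finset.inf'_le _ (Finset.mem_univ k)
    have hωk : ω k ≤ 1 := by
      rw [← hωsum]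
      exact Finset.single_le_sum (fun i _ => (hω i).le) (Finset.mem_univ k)
    have hesum : ∑ l ∈ Finset.univ.erase k, ω l = 1 - ω k := by
      rw [Finset.sum_erase_eq_sub (Finset.mem_univ k), hωsum]
    have h1 : ∑ l ∈ Finset.univ.erase k, ‖Q k l‖ =
        ∑ l ∈ Finset.univ.erase k, Δx / 2 * ω l * T l := by
      refine Finset.sum_congr rfl fun l hl => ?_
      have hkl : k ≠ l := (Finset.ne_of_mem_erase hl).symm
      rw [hQ k l, if_neg hkl, zero_sub, Real.norm_eq_abs, abs_neg, abs_of_nonneg]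
      exact mul_nonneg (mul_nonneg (by linarith) (hω l).le) (hTpos l).le
    have h2 : ∑ l ∈ Finset.univ.erase k, Δx / 2 * ω l * T l ≤
        Δx / 2 * (1 + χM + χN) * (1 - ω k) := by
      calc ∑ l ∈ Finset.univ.erase k, Δx / 2 * ω l * T l
          ≤ ∑ l ∈ Finset.univ.erase k, Δx / 2 * (1 + χM + χN) * ω l := by
            refine Finset.sum_le_sum fun l _ => ?_
            nlinarith [mul_le_mul_of_nonneg_left (hT_ub l)
              (mul_nonneg (half_pos hΔx).le (hω l).le)]
        _ = Δx / 2 * (1 + χM + χN) * (1 - ω k) := by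
            rw [← Finset.mul_sum, hesum]
    have hdiag : ‖Q k k‖ = |v k| + Δx / 2 * T k * (1 - ω k) := by
      rw [hQ k k, if_pos rfl, Real.norm_eq_abs, abs_of_nonneg]
      · ring
      · have := hTpos k
        have h0 : (0:ℝ) ≤ Δx / 2 * T k * (1 - ω k) := by
          have : (0:ℝ) ≤ 1 - ω k := by linarith
          positivity
        have := abs_nonneg (v k)
        nlinarith
    rw [h1, hdiag]
    have hs : (0:ℝ) ≤ 1 - ω k := by linarith
    have hs' : 1 - ω k < 1 := by have := hω k; linarith
    have hTk := hT_lb k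
    have hχ : 0 ≤ Δx * (χM + χN) := by positivity
    have hc : (0:ℝ) ≤ Δx / 2 * (1 - ω k) := mul_nonneg (half_pos hΔx).le hs
    nlinarith [h2, hvk, hnr, mul_le_of_le_one_right hχ (by linarith : 1 - ω k ≤ 1),
      mul_le_mul_of_nonneg_left hTk hc]
  have hunit : IsUnit Q := (Matrix.isUnit_iff_isUnit_det Q).mpr (isUnit_iff_ne_zero.mpr hdet)
  refine ⟨hunit, ?_⟩
  rw [← Matrix.mul_assoc, Matrix.mul_nonsing_inv Q ((Matrix.isUnit_iff_isUnit_det Q).mp hunit),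
    Matrix.one_mul]
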